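/- For the specific Best-Fit packing rule restricted to items of size 1/4 and 1/3 into unit bins, where a bin is closed once its load exceeds 3/4, at any point in time there are at most two open bins, and the possible configurations of open bin loads are exactly: none; a single bin of load 1/4, 1/3, 1/2, 7/12, 2/3, or 3/4; or two bins with loads (3/4, 1/3) or (3/4, 2/3). -/
import Mathlib

open scoped Classical

/-- One step of Best-Fit on items of size 1/4 and 1/3: a state is the multiset of loads of
the open bins (a bin is closed, i.e., removed, once its load exceeds 3/4). The item is
placed into a fullest open bin where it fits; a new bin is opened only if it fits nowhere. -/
inductive MStep : Multiset ℝ → ℝ → Multiset ℝ → Prop where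
  | place (s : Multiset ℝ) (x L : ℝ) (hL : L ∈ s) (hfit : L + x ≤ 1)
      (hmax : ∀ L' ∈ s, L' + x ≤ 1 → L' ≤ L) :
      MStep s x (s.erase L + (if L + x ≤ 3/4 then {L + x} else 0))
  | new (s : Multiset ℝ) (x : ℝ) (hno : ∀ L ∈ s, ¬ (L + x ≤ 1)) :
      MStep s x (s + (if x ≤ 3/4 then {x} else 0))

/-- The configurations of open bins reachable from the empty configuration by arrivals of
items of size 1/4 or 1/3. -/
inductive MReach : Multiset ℝ → Prop where
  | init : MReach 0
  | step (s t : Multiset ℝ) (x : ℝ) (hx : x = 1/4 ∨ x = 1/3) :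
      MReach s → MStep s x t → MReach t

def Sset (s : Multiset ℝ) : Prop :=
  s = 0 ∨ s = {1/4} ∨ s = {1/3} ∨ s = {1/2} ∨ s = {7/12} ∨ s = {2/3} ∨ s = {3/4} ∨
    s = {3/4, 1/3} ∨ s = {3/4, 2/3}

lemma Sset_closed (s t : Multiset ℝ) (x : ℝ) (hx : x = 1/4 ∨ x = 1/3)
    (hs : Sset s) (h : MStep s x t) : Sset t := by
  cases h with
  | place L hL hfit hmax =>
    rcases hs with rfl|rfl|rfl|rfl|rfl|rfl|rfl|rfl|rfl <;>
    rcases hx with rfl|rfl <;>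
    [skip; skip;
     (rw [Multiset.mem_singleton] at hL; subst hL);
     (rw [Multiset.mem_singleton] at hL; subst hL);
     (rw [Multiset.mem_singleton] at hL; subst hL);
     (rw [Multiset.mem_singleton] at hL; subst hL);
     (rw [Multiset.mem_singleton] at hL; subst hL);
     (rw [Multiset.mem_singleton] at hL; subst hL);
     (rw [Multiset.mem_singleton] at hL; subst hL);
     (rw [Multiset.mem_singleton] at hL; subst hL);
     (rw [Multiset.mem_singleton] at hL; subst hL);
     (rw [Multiset.mem_singleton] at hL; subst hL);
     (rw [Multiset.mem_singleton] at hL; subst hL);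
     (rw [Multiset.mem_singleton] at hL; subst hL);
     (simp only [Multiset.insert_eq_cons, Multiset.mem_cons, Multiset.mem_singleton] at hL; rcases hL with rfl|rfl);
     (simp only [Multiset.insert_eq_cons, Multiset.mem_cons, Multiset.mem_singleton] at hL; rcases hL with rfl|rfl);
     (simp only [Multiset.insert_eq_cons, Multiset.mem_cons, Multiset.mem_singleton] at hL; rcases hL with rfl|rfl);
     (simp only [Multiset.insert_eq_cons, Multiset.mem_cons, Multiset.mem_singleton] at hL; rcases hL with rfl|rfl)] <;>
    first
      | exact absurd hL (Multiset.notMem_zero L)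
      | (norm_num at hfit; done)
      | (simp only [Sset, Multiset.erase_singleton, Multiset.erase_cons_head]
         norm_num [Multiset.erase_cons_tail, Multiset.cons_add, Multiset.singleton_add]
         done)
      | (exfalso
         have h34 : (3:ℝ)/4 ≤ 1/3 := hmax (3/4) (Multiset.mem_cons_self _ _) (by norm_num)
         norm_num at h34)
      | (exfalso
         have h34 : (3:ℝ)/4 ≤ 2/3 := hmax (3/4) (Multiset.mem_cons_self _ _) (by norm_num)
         norm_num at h34)
  | new hno =>
    rcases hs with rfl|rfl|rfl|rfl|rfl|rfl|rfl|rfl|rfl <;>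
    rcases hx with rfl|rfl <;>
    first
      | (simp only [Sset]
         norm_num [Multiset.cons_add, Multiset.singleton_add]
         done)
      | exact ((hno (1/4) (Multiset.mem_singleton_self _)) (by norm_num)).elim
      | exact ((hno (1/3) (Multiset.mem_singleton_self _)) (by norm_num)).elim
      | exact ((hno (1/2) (Multiset.mem_singleton_self _)) (by norm_num)).elim
      | exact ((hno (7/12) (Multiset.mem_singleton_self _)) (by norm_num)).elim
      | exact ((hno (2/3) (Multiset.mem_singleton_self _)) (by norm_num)).elim
      | exact ((hno (3/4) (Multiset.mem_singleton_self _)) (by norm_num)).elim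
      | exact ((hno (1/3) (Multiset.mem_cons_of_mem (Multiset.mem_singleton_self _))) (by norm_num)).elim
      | exact ((hno (2/3) (Multiset.mem_cons_of_mem (Multiset.mem_singleton_self _))) (by norm_num)).elim

lemma mreach_congr {s t : Multiset ℝ} (h : MReach s) (e : s = t) : MReach t := e ▸ h

lemma reach_Sset (s : Multiset ℝ) (h : MReach s) : Sset s := by
  induction h with
  | init => left; rfl
  | step s t x hx _ hstep ih => exact Sset_closed s t x hx ih hstep

lemma r14 : MReach ({1/4} : Multiset ℝ) :=
  mreach_congr (MReach.step 0 _ (1/4) (Or.inl rfl) .init (MStep.new 0 (1/4) (by simp)))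
    (by norm_num)

lemma r13 : MReach ({1/3} : Multiset ℝ) :=
  mreach_congr (MReach.step 0 _ (1/3) (Or.inr rfl) .init (MStep.new 0 (1/3) (by simp)))
    (by norm_num)

lemma r12 : MReach ({1/2} : Multiset ℝ) :=
  mreach_congr (MReach.step {1/4} _ (1/4) (Or.inl rfl) r14
      (MStep.place {1/4} (1/4) (1/4) (Multiset.mem_singleton_self _) (by norm_num)
        (by intro L' h _; rw [Multiset.mem_singleton] at h; exact le_of_eq h)))
    (by norm_num [Multiset.erase_singleton])

lemma r712 : MReach ({7/12} : Multiset ℝ) :=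
  mreach_congr (MReach.step {1/4} _ (1/3) (Or.inr rfl) r14
      (MStep.place {1/4} (1/3) (1/4) (Multiset.mem_singleton_self _) (by norm_num)
        (by intro L' h _; rw [Multiset.mem_singleton] at h; exact le_of_eq h)))
    (by norm_num [Multiset.erase_singleton])

lemma r23 : MReach ({2/3} : Multiset ℝ) :=
  mreach_congr (MReach.step {1/3} _ (1/3) (Or.inr rfl) r13
      (MStep.place {1/3} (1/3) (1/3) (Multiset.mem_singleton_self _) (by norm_num)
        (by intro L' h _; rw [Multiset.mem_singleton] at h; exact le_of_eq h)))
    (by norm_num [Multiset.erase_singleton])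

lemma r34 : MReach ({3/4} : Multiset ℝ) :=
  mreach_congr (MReach.step {1/2} _ (1/4) (Or.inl rfl) r12
      (MStep.place {1/2} (1/4) (1/2) (Multiset.mem_singleton_self _) (by norm_num)
        (by intro L' h _; rw [Multiset.mem_singleton] at h; exact le_of_eq h)))
    (by norm_num [Multiset.erase_singleton])

lemma rp1 : MReach ({3/4, 1/3} : Multiset ℝ) :=
  mreach_congr (MReach.step {3/4} _ (1/3) (Or.inr rfl) r34
      (MStep.new {3/4} (1/3)
        (by intro L h; rw [Multiset.mem_singleton] at h; subst h; norm_num)))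
    (by norm_num [Multiset.singleton_add])

lemma rp2 : MReach ({3/4, 2/3} : Multiset ℝ) :=
  mreach_congr (MReach.step {3/4, 1/3} _ (1/3) (Or.inr rfl) rp1
      (MStep.place {3/4, 1/3} (1/3) (1/3)
        (Multiset.mem_cons_of_mem (Multiset.mem_singleton_self _)) (by norm_num)
        (by
          intro L' h hf
          simp only [Multiset.insert_eq_cons, Multiset.mem_cons, Multiset.mem_singleton] at h
          rcases h with rfl|rfl
          · norm_num at hf
          · exact le_refl _)))
    (by norm_num [Multiset.erase_cons_tail, Multiset.cons_add, Multiset.singleton_add])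

/-- For Best-Fit on items of size 1/4 and 1/3 (bins closed once their load exceeds 3/4),
at any point in time there are at most two open bins, and the reachable open-bin
configurations are exactly: none; a single bin of load 1/4, 1/3, 1/2, 7/12, 2/3 or 3/4;
or two bins with loads (3/4, 1/3) or (3/4, 2/3). -/
theorem stmt15 : ∀ s : Multiset ℝ,
    (MReach s ↔
      (s = 0 ∨ s = {1/4} ∨ s = {1/3} ∨ s = {1/2} ∨ s = {7/12} ∨ s = {2/3} ∨ s = {3/4} ∨
        s = {3/4, 1/3} ∨ s = {3/4, 2/3})) ∧
    (MReach s → Multiset.card s ≤ 2) := by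
  intro s
  constructor
  · constructor
    · intro h; exact reach_Sset s h
    · intro h
      rcases h with rfl|rfl|rfl|rfl|rfl|rfl|rfl|rfl|rfl
      exacts [.init, r14, r13, r12, r712, r23, r34, rp1, rp2]
  · intro h
    rcases reach_Sset s h with rfl|rfl|rfl|rfl|rfl|rfl|rfl|rfl|rfl <;> simp [Multiset.insert_eq_cons]
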